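/- (Locality of the Retro* update.) Let T and T' be AND-OR synthesis trees that are identical except for the subtree rooted at the molecule node at a fixed position π (as produced by expanding the frontier leaf at π). Then: (i) for every node position that is neither a prefix of π nor an extension of π, the rn_V values at that position in T and T' are equal; and (ii) if σ is a proper prefix of π at which rn_V in T equals rn_V in T', then rn_V in T equals rn_V in T' at every prefix of σ as well (so the bottom-up propagation of reaction-number updates may stop as soon as an ancestor's value is unchanged). -/

import Mathlib

inductive Mol (M : Type) where
  | frontier : M → Mol M
  | node : (ℝ × List (Mol M)) → List (ℝ × List (Mol M)) → Mol M

mutual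
noncomputable def rn {M : Type} (V : M → ℝ) : Mol M → ℝ
  | .frontier m => V m
  | .node r rs => (rs.attach.map fun ⟨R, _⟩ => rnR V R).foldr min (rnR V r)
termination_by u => sizeOf u
decreasing_by
  · simp; omega
  · have := List.sizeOf_lt_of_mem ‹R ∈ rs›; simp; omega

noncomputable def rnR {M : Type} (V : M → ℝ) : ℝ × List (Mol M) → ℝ
  | (c, ms) => c + (ms.attach.map fun ⟨u, _⟩ => rn V u).sum
termination_by R => sizeOf R
decreasing_by
  · have := List.sizeOf_lt_of_mem ‹u ∈ ms›; simp; omega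
end

mutual
/-- The node (molecule `inl` or reaction `inr`) at a position of the tree; a
position is a root-to-node path given by successive child indices, alternately
selecting a reaction child of a molecule node and a molecule child of a
reaction node. -/
def nodeAtM {M : Type} : Mol M → List ℕ → Option (Mol M ⊕ (ℝ × List (Mol M)))
  | u, [] => some (Sum.inl u)
  | .frontier _, _ :: _ => none
  | .node r rs, i :: p =>
    match (r :: rs)[i]? with
    | none => none
    | some R => nodeAtR R p
termination_by _ p => p.length

def nodeAtR {M : Type} : (ℝ × List (Mol M)) → List ℕ → Option (Mol M ⊕ (ℝ × List (Mol M)))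
  | R, [] => some (Sum.inr R)
  | R, j :: p =>
    match R.2[j]? with
    | none => none
    | some u => nodeAtM u p
termination_by _ p => p.length
end

mutual
/-- Replace the molecule node at a given position by `s` (no-op on invalid
positions and on positions addressing a reaction node). -/
def replaceM {M : Type} : Mol M → List ℕ → Mol M → Mol M
  | _, [], s => s
  | .frontier m, _ :: _, _ => .frontier m
  | .node r rs, 0 :: p, s => .node (replaceR r p s) rs
  | .node r rs, (i + 1) :: p, s => .node r (rs.modify i (fun R => replaceR R p s))
termination_by _ p _ => p.length

def replaceR {M : Type} : (ℝ × List (Mol M)) → List ℕ → Mol M → (ℝ × List (Mol M))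
  | R, [], _ => R
  | (c, ms), j :: p, s => (c, ms.modify j (fun u => replaceM u p s))
termination_by _ p _ => p.length
end

/-- The reaction number of the node at a given position, if it exists. -/
noncomputable def rnAt {M : Type} (V : M → ℝ) (T : Mol M) (p : List ℕ) : Option ℝ :=
  (nodeAtM T p).map (Sum.elim (rn V) (rnR V))

namespace Mol
variable {M : Type} (V : M → ℝ)

theorem rn_node (r : ℝ × List (Mol M)) (rs : List (ℝ × List (Mol M))) :
    rn V (.node r rs) = (rs.map (rnR V)).foldr min (rnR V r) := by
  rw [rn]
  congr 1
  simp

theorem rnR_pair (c : ℝ) (ms : List (Mol M)) :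
    rnR V (c, ms) = c + (ms.map (rn V)).sum := by
  rw [rnR]
  congr 2
  simp

end Mol
namespace Mol
variable {M : Type}

mutual
theorem nodeAt_append_M : ∀ (a b : List ℕ) (u : Mol M),
    nodeAtM u (a ++ b) = (nodeAtM u a).bind
      (Sum.elim (fun v => nodeAtM v b) (fun R => nodeAtR R b))
  | [], b, u => by simp [nodeAtM]
  | i :: p, b, .frontier m => by simp [nodeAtM]
  | i :: p, b, .node r rs => by
    simp only [List.cons_append, nodeAtM]
    cases h : (r :: rs)[i]? with
    | none => simp
    | some R => simpa using nodeAt_append_R p b R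
termination_by a _ _ => a.length

theorem nodeAt_append_R : ∀ (a b : List ℕ) (R : ℝ × List (Mol M)),
    nodeAtR R (a ++ b) = (nodeAtR R a).bind
      (Sum.elim (fun v => nodeAtM v b) (fun S => nodeAtR S b))
  | [], b, R => by simp [nodeAtR]
  | j :: p, b, R => by
    simp only [List.cons_append, nodeAtR]
    cases h : R.2[j]? with
    | none => simp
    | some u => simpa using nodeAt_append_M p b u
termination_by a _ _ => a.length
end

end Mol
namespace Mol
variable {M : Type}

mutual
theorem nodeAt_replace_prefix_M : ∀ (a b : List ℕ) (u s : Mol M),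
    nodeAtM (replaceM u (a ++ b) s) a = (nodeAtM u a).map
      (Sum.map (fun v => replaceM v b s) (fun R => replaceR R b s))
  | [], b, u, s => by simp [nodeAtM, replaceM]
  | i :: p, b, .frontier m, s => by simp [nodeAtM, replaceM]
  | 0 :: p, b, .node r rs, s => by
    simp only [List.cons_append, replaceM, nodeAtM, List.getElem?_cons_zero]
    simpa using nodeAt_replace_prefix_R p b r s
  | (i+1) :: p, b, .node r rs, s => by
    simp only [List.cons_append, replaceM, nodeAtM, List.getElem?_cons_succ]
    rw [List.getElem?_modify]
    simp only [if_pos rfl]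
    cases h : rs[i]? with
    | none => simp
    | some R => simpa using nodeAt_replace_prefix_R p b R s
termination_by a _ _ _ => a.length

theorem nodeAt_replace_prefix_R : ∀ (a b : List ℕ) (R : ℝ × List (Mol M)) (s : Mol M),
    nodeAtR (replaceR R (a ++ b) s) a = (nodeAtR R a).map
      (Sum.map (fun v => replaceM v b s) (fun S => replaceR S b s))
  | [], b, R, s => by simp [nodeAtR, replaceR]
  | j :: p, b, (c, ms), s => by
    simp only [List.cons_append, replaceR, nodeAtR]
    rw [List.getElem?_modify]
    simp only [if_pos rfl]
    cases h : ms[j]? with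
    | none => simp
    | some u => simpa using nodeAt_replace_prefix_M p b u s
termination_by a _ _ _ => a.length
end

end Mol
namespace Mol
variable {M : Type}

mutual
theorem nodeAt_replace_off_M : ∀ (π p : List ℕ) (u s : Mol M),
    ¬ p <+: π → ¬ π <+: p → nodeAtM (replaceM u π s) p = nodeAtM u p
  | [], p, u, s, h1, h2 => absurd List.nil_prefix h2
  | i :: π', [], u, s, h1, h2 => absurd List.nil_prefix h1
  | i :: π', j :: p', .frontier m, s, h1, h2 => by simp [replaceM]
  | 0 :: π', 0 :: p', .node r rs, s, h1, h2 => by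
    have h1' : ¬ p' <+: π' := fun h => h1 (List.cons_prefix_cons.mpr ⟨rfl, h⟩)
    have h2' : ¬ π' <+: p' := fun h => h2 (List.cons_prefix_cons.mpr ⟨rfl, h⟩)
    simp only [replaceM, nodeAtM, List.getElem?_cons_zero]
    exact nodeAt_replace_off_R π' p' r s h1' h2'
  | 0 :: π', (j+1) :: p', .node r rs, s, h1, h2 => by
    simp [replaceM, nodeAtM]
  | (i+1) :: π', 0 :: p', .node r rs, s, h1, h2 => by
    simp [replaceM, nodeAtM]
  | (i+1) :: π', (j+1) :: p', .node r rs, s, h1, h2 => by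
    simp only [replaceM, nodeAtM, List.getElem?_cons_succ]
    rw [List.getElem?_modify]
    by_cases hij : i = j
    · subst hij
      simp only [if_pos rfl]
      have h1' : ¬ p' <+: π' := fun h => h1 (List.cons_prefix_cons.mpr ⟨rfl, h⟩)
      have h2' : ¬ π' <+: p' := fun h => h2 (List.cons_prefix_cons.mpr ⟨rfl, h⟩)
      cases h : rs[i]? with
      | none => simp
      | some R => simpa using nodeAt_replace_off_R π' p' R s h1' h2'
    · simp [hij]
termination_by π _ _ _ => π.length

theorem nodeAt_replace_off_R : ∀ (π p : List ℕ) (R : ℝ × List (Mol M)) (s : Mol M),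
    ¬ p <+: π → ¬ π <+: p → nodeAtR (replaceR R π s) p = nodeAtR R p
  | [], p, R, s, h1, h2 => absurd List.nil_prefix h2
  | i :: π', [], R, s, h1, h2 => absurd List.nil_prefix h1
  | i :: π', j :: p', (c, ms), s, h1, h2 => by
    simp only [replaceR, nodeAtR]
    rw [List.getElem?_modify]
    by_cases hij : i = j
    · subst hij
      simp only [if_pos rfl]
      have h1' : ¬ p' <+: π' := fun h => h1 (List.cons_prefix_cons.mpr ⟨rfl, h⟩)
      have h2' : ¬ π' <+: p' := fun h => h2 (List.cons_prefix_cons.mpr ⟨rfl, h⟩)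
      cases h : ms[i]? with
      | none => simp
      | some u => simpa using nodeAt_replace_off_M π' p' u s h1' h2'
    · simp [hij]
termination_by π _ _ _ => π.length
end

end Mol
namespace Mol
variable {M : Type} (V : M → ℝ)

noncomputable def rnAtR (R : ℝ × List (Mol M)) (p : List ℕ) : Option ℝ :=
  (nodeAtR R p).map (Sum.elim (rn V) (rnR V))

theorem map_modify_eq {α β : Type _} (g : α → β) (f : α → α) (i : ℕ) (l : List α)
    (h : ∀ x, l[i]? = some x → g (f x) = g x) : (l.modify i f).map g = l.map g := by
  apply List.ext_getElem?
  intro n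
  simp only [List.getElem?_map, List.getElem?_modify]
  by_cases hin : i = n
  · subst hin
    cases hx : l[i]? with
    | none => simp
    | some x => simp [h x hx]
  · simp [hin]

mutual
theorem rn_replace_eq_of_agree_M : ∀ (a b : List ℕ) (u s : Mol M),
    rnAt V u a = rnAt V (replaceM u (a ++ b) s) a →
    rn V u = rn V (replaceM u (a ++ b) s)
  | [], b, u, s, h => by
    simpa [rnAt, nodeAtM] using h
  | i :: p, b, .frontier m, s, h => by
    simp [replaceM]
  | 0 :: p, b, .node r rs, s, h => by
    simp only [List.cons_append, replaceM]
    have h' : rnAtR V r p = rnAtR V (replaceR r (p ++ b) s) p := by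
      simpa [rnAt, rnAtR, nodeAtM, List.cons_append, replaceM] using h
    rw [rn_node, rn_node, rn_replace_eq_of_agree_R p b r s h']
  | (i+1) :: p, b, .node r rs, s, h => by
    simp only [List.cons_append, replaceM]
    rw [rn_node, rn_node]
    congr 1
    refine (map_modify_eq _ _ _ _ ?_).symm
    intro R hR
    refine (rn_replace_eq_of_agree_R p b R s ?_).symm
    have h' := h
    simp only [rnAt, nodeAtM, List.cons_append, replaceM, List.getElem?_cons_succ] at h'
    rw [List.getElem?_modify, hR] at h'
    simpa [rnAtR, hR] using h'
termination_by a _ _ _ => a.length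

theorem rn_replace_eq_of_agree_R : ∀ (a b : List ℕ) (R : ℝ × List (Mol M)) (s : Mol M),
    rnAtR V R a = rnAtR V (replaceR R (a ++ b) s) a →
    rnR V R = rnR V (replaceR R (a ++ b) s)
  | [], b, R, s, h => by
    simpa [rnAtR, nodeAtR] using h
  | j :: p, b, (c, ms), s, h => by
    simp only [List.cons_append, replaceR]
    rw [rnR_pair, rnR_pair]
    congr 2
    refine (map_modify_eq _ _ _ _ ?_).symm
    intro u hu
    refine (rn_replace_eq_of_agree_M p b u s ?_).symm
    have h' := h
    simp only [rnAtR, nodeAtR, List.cons_append, replaceR] at h'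
    rw [List.getElem?_modify, hu] at h'
    simpa [rnAt, hu] using h'
termination_by a _ _ _ => a.length
end

end Mol
theorem retroStar_update_local {M : Type} (V : M → ℝ) (T T' : Mol M)
    (π : List ℕ) (s : Mol M)
    (hmol : ∃ u : Mol M, nodeAtM T π = some (Sum.inl u))
    (hT' : T' = replaceM T π s) :
    (∀ p : List ℕ, ¬ p <+: π → ¬ π <+: p → rnAt V T p = rnAt V T' p) ∧
    (∀ σ : List ℕ, σ <+: π → σ ≠ π → rnAt V T σ = rnAt V T' σ →
      ∀ τ : List ℕ, τ <+: σ → rnAt V T τ = rnAt V T' τ) := by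
  subst hT'
  constructor
  · intro p h1 h2
    unfold rnAt
    rw [Mol.nodeAt_replace_off_M π p T s h1 h2]
  · intro σ hσπ hne hagree τ hτσ
    obtain ⟨ρ', rfl⟩ := hσπ
    obtain ⟨ρ, rfl⟩ := hτσ
    rw [List.append_assoc] at hagree ⊢
    have hD := Mol.nodeAt_replace_prefix_M τ (ρ ++ ρ') T s
    have hGT := Mol.nodeAt_append_M τ ρ T
    have hGT' := Mol.nodeAt_append_M τ ρ (replaceM T (τ ++ (ρ ++ ρ')) s)
    cases hX : nodeAtM T τ with
    | none =>
      simp only [rnAt, hD, hX, Option.map_none]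
    | some X =>
      cases X with
      | inl v =>
        have hT'τ : nodeAtM (replaceM T (τ ++ (ρ ++ ρ')) s) τ
            = some (Sum.inl (replaceM v (ρ ++ ρ') s)) := by
          rw [hD, hX]; rfl
        have key : rn V v = rn V (replaceM v (ρ ++ ρ') s) := by
          apply Mol.rn_replace_eq_of_agree_M V ρ ρ' v s
          have e1 : rnAt V T (τ ++ ρ) = rnAt V v ρ := by
            unfold rnAt
            rw [hGT, hX]
            rfl
          have e2 : rnAt V (replaceM T (τ ++ (ρ ++ ρ')) s) (τ ++ ρ)
              = rnAt V (replaceM v (ρ ++ ρ') s) ρ := by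
            unfold rnAt
            rw [hGT', hT'τ]
            rfl
          rw [← e1, ← e2]
          exact hagree
        simp only [rnAt, hX, hT'τ, Option.map_some, Sum.elim_inl, key]
      | inr R =>
        have hT'τ : nodeAtM (replaceM T (τ ++ (ρ ++ ρ')) s) τ
            = some (Sum.inr (replaceR R (ρ ++ ρ') s)) := by
          rw [hD, hX]; rfl
        have key : rnR V R = rnR V (replaceR R (ρ ++ ρ') s) := by
          apply Mol.rn_replace_eq_of_agree_R V ρ ρ' R s
          have e1 : rnAt V T (τ ++ ρ) = Mol.rnAtR V R ρ := by
            unfold rnAt Mol.rnAtR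
            rw [hGT, hX]
            rfl
          have e2 : rnAt V (replaceM T (τ ++ (ρ ++ ρ')) s) (τ ++ ρ)
              = Mol.rnAtR V (replaceR R (ρ ++ ρ') s) ρ := by
            unfold rnAt Mol.rnAtR
            rw [hGT', hT'τ]
            rfl
          rw [← e1, ← e2]
          exact hagree
        simp only [rnAt, hX, hT'τ, Option.map_some, Sum.elim_inr, key]
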